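/- Let G be a second countable locally compact Hausdorff topological group with a right Haar measure ν (a nonzero right-invariant Radon measure) and let ω be a Borel 2-cocycle on G. Then for every g ∈ G there is a unique unitary operator ρ^{ω̃}_g on L²(G,ν) such that for every ξ ∈ L²(G,ν) one has (ρ^{ω̃}_g ξ)(s) = ω(g⁻¹,s⁻¹)·ξ(sg) for ν-almost every s ∈ G; moreover ρ^{ω̃}_g ∘ ρ^{ω̃}_h = ω̃(g,h)·ρ^{ω̃}_{gh} for all g,h ∈ G, where ω̃(g,h) = ω(h⁻¹,g⁻¹). -/

import Mathlib

open MeasureTheory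

section Stmt6Aux

variable {G : Type*} [TopologicalSpace G] [Group G] [IsTopologicalGroup G]
    [MeasurableSpace G] [BorelSpace G]
    (ν : Measure G) [ν.IsMulRightInvariant]

lemma stmt6_memLp_twist (m : G → ℂ) (hm : Measurable m) (hnorm : ∀ s, ‖m s‖ = 1) (g : G)
    (ξ : Lp ℂ 2 ν) : MemLp (fun s => m s * (ξ : G → ℂ) (s * g)) 2 ν := by
  have hmp := measurePreserving_mul_right ν g
  have hξ' : MemLp (fun s => (ξ : G → ℂ) (s * g)) 2 ν :=
    (Lp.memLp ξ).comp_measurePreserving hmp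
  refine ⟨hm.aestronglyMeasurable.mul hξ'.1, ?_⟩
  have : eLpNorm (fun s => m s * (ξ : G → ℂ) (s * g)) 2 ν
      = eLpNorm (fun s => (ξ : G → ℂ) (s * g)) 2 ν := by
    apply eLpNorm_congr_norm_ae
    filter_upwards with s
    simp [hnorm s]
  rw [this]; exact hξ'.2

noncomputable def stmt6_twist (m : G → ℂ) (hm : Measurable m) (hnorm : ∀ s, ‖m s‖ = 1)
    (g : G) (ξ : Lp ℂ 2 ν) : Lp ℂ 2 ν :=
  (stmt6_memLp_twist ν m hm hnorm g ξ).toLp _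

lemma stmt6_coeFn_twist (m : G → ℂ) (hm : Measurable m) (hnorm : ∀ s, ‖m s‖ = 1)
    (g : G) (ξ : Lp ℂ 2 ν) :
    (stmt6_twist ν m hm hnorm g ξ : G → ℂ) =ᵐ[ν] fun s => m s * (ξ : G → ℂ) (s * g) :=
  MemLp.coeFn_toLp _

lemma stmt6_ae_comp (g : G) {f f' : G → ℂ} (h : f =ᵐ[ν] f') :
    (fun s => f (s * g)) =ᵐ[ν] fun s => f' (s * g) :=
  (measurePreserving_mul_right ν g).quasiMeasurePreserving.ae_eq_comp h

lemma stmt6_coeFn_twist_twist (m m' : G → ℂ) (hm : Measurable m) (hn : ∀ s, ‖m s‖ = 1)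
    (hm' : Measurable m') (hn' : ∀ s, ‖m' s‖ = 1) (g h : G) (ξ : Lp ℂ 2 ν) :
    (stmt6_twist ν m hm hn g (stmt6_twist ν m' hm' hn' h ξ) : G → ℂ)
      =ᵐ[ν] fun s => m s * (m' (s * g) * (ξ : G → ℂ) (s * g * h)) := by
  have h1 := stmt6_coeFn_twist ν m hm hn g (stmt6_twist ν m' hm' hn' h ξ)
  have h2 : (fun s => (stmt6_twist ν m' hm' hn' h ξ : G → ℂ) (s * g)) =ᵐ[ν]
      fun s => m' (s * g) * (ξ : G → ℂ) (s * g * h) :=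
    stmt6_ae_comp ν g (stmt6_coeFn_twist ν m' hm' hn' h ξ)
  filter_upwards [h1, h2] with s hs1 hs2
  rw [hs1, hs2]

lemma stmt6_norm_twist (m : G → ℂ) (hm : Measurable m) (hnorm : ∀ s, ‖m s‖ = 1)
    (g : G) (ξ : Lp ℂ 2 ν) : ‖stmt6_twist ν m hm hnorm g ξ‖ = ‖ξ‖ := by
  rw [stmt6_twist, Lp.norm_toLp, Lp.norm_def]
  congr 1
  have h1 : eLpNorm (fun s => m s * (ξ : G → ℂ) (s * g)) 2 ν
      = eLpNorm (fun s => (ξ : G → ℂ) (s * g)) 2 ν := by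
    apply eLpNorm_congr_norm_ae
    filter_upwards with s
    simp [hnorm s]
  rw [h1]
  exact eLpNorm_comp_measurePreserving (Lp.aestronglyMeasurable ξ)
    (measurePreserving_mul_right ν g)

end Stmt6Aux

/-- Let `G` be a second countable locally compact Hausdorff group with a right Haar measure `ν`
(a nonzero right-invariant Radon measure) and `ω` a Borel `𝕋`-valued 2-cocycle on `G`. Then for
every `g ∈ G` there is a unique unitary `ρ^{ω̃}_g` on `L²(G,ν)` with
`(ρ^{ω̃}_g ξ)(s) = ω(g⁻¹,s⁻¹)·ξ(sg)` a.e., and any such family satisfies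
`ρ^{ω̃}_g ∘ ρ^{ω̃}_h = ω̃(g,h)·ρ^{ω̃}_{gh}` where `ω̃(g,h) = ω(h⁻¹,g⁻¹)`. -/
theorem stmt_6 {G : Type*} [TopologicalSpace G] [Group G] [IsTopologicalGroup G]
    [SecondCountableTopology G] [LocallyCompactSpace G] [T2Space G]
    [MeasurableSpace G] [BorelSpace G]
    (ν : Measure G) [ν.IsMulRightInvariant] [ν.Regular] (hν : ν ≠ 0)
    (ω : G → G → ℂ)
    (hmeas : Measurable fun p : G × G => ω p.1 p.2)
    (habs : ∀ g h : G, ‖ω g h‖ = 1)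
    (hcoc : ∀ g h k : G, ω g h * ω (g * h) k = ω g (h * k) * ω h k) :
    (∀ g : G, ∃! U : Lp ℂ 2 ν ≃ₗᵢ[ℂ] Lp ℂ 2 ν,
      ∀ ξ : Lp ℂ 2 ν, (U ξ : G → ℂ) =ᵐ[ν] fun s => ω g⁻¹ s⁻¹ * ξ (s * g)) ∧
    (∀ rho : G → (Lp ℂ 2 ν ≃ₗᵢ[ℂ] Lp ℂ 2 ν),
      (∀ (g : G) (ξ : Lp ℂ 2 ν), (rho g ξ : G → ℂ) =ᵐ[ν] fun s => ω g⁻¹ s⁻¹ * ξ (s * g)) →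
      ∀ (g h : G) (ξ : Lp ℂ 2 ν), rho g (rho h ξ) = ω h⁻¹ g⁻¹ • rho (g * h) ξ) := by
  have hnorm : ∀ g h : G, ‖ω g h‖ = 1 := fun g h => by
    exact habs g h
  have hne : ∀ g h : G, ω g h ≠ 0 := fun g h => by
    intro h0
    have := hnorm g h
    rw [h0] at this; simp at this
  constructor
  · intro g
    set m : G → ℂ := fun s => ω g⁻¹ s⁻¹ with hm_def
    have hm : Measurable m :=
      hmeas.comp (measurable_const.prodMk measurable_inv)
    have hmn : ∀ s, ‖m s‖ = 1 := fun s => hnorm _ _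
    set m' : G → ℂ := fun t => (m (t * g⁻¹))⁻¹ with hm'_def
    have hm' : Measurable m' := (hm.comp (measurable_mul_const g⁻¹)).inv
    have hmn' : ∀ t, ‖m' t‖ = 1 := fun t => by
      rw [hm'_def]; simp [norm_inv, hmn]
    set F := stmt6_twist ν m hm hmn g with hF
    set V := stmt6_twist ν m' hm' hmn' g⁻¹ with hV
    have hleft : ∀ ξ, V (F ξ) = ξ := by
      intro ξ
      apply Lp.ext
      refine (stmt6_coeFn_twist_twist ν m' m hm' hmn' hm hmn g⁻¹ g ξ).trans ?_
      filter_upwards with t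
      show (m (t * g⁻¹))⁻¹ * (m (t * g⁻¹) * (ξ : G → ℂ) (t * g⁻¹ * g)) = (ξ : G → ℂ) t
      rw [inv_mul_cancel_right]
      exact inv_mul_cancel_left₀ (fun h0 => by simpa [h0] using hmn (t * g⁻¹)) _
    have hright : ∀ ξ, F (V ξ) = ξ := by
      intro ξ
      apply Lp.ext
      refine (stmt6_coeFn_twist_twist ν m m' hm hmn hm' hmn' g g⁻¹ ξ).trans ?_
      filter_upwards with s
      show m s * ((m (s * g * g⁻¹))⁻¹ * (ξ : G → ℂ) (s * g * g⁻¹)) = (ξ : G → ℂ) s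
      rw [mul_inv_cancel_right]
      exact mul_inv_cancel_left₀ (fun h0 => by simpa [h0] using hmn s) _
    have hadd : ∀ ξ η, F (ξ + η) = F ξ + F η := by
      intro ξ η
      apply Lp.ext
      refine (stmt6_coeFn_twist ν m hm hmn g (ξ + η)).trans ?_
      have h2 : (fun s => ((ξ + η : Lp ℂ 2 ν) : G → ℂ) (s * g)) =ᵐ[ν]
          fun s => (ξ : G → ℂ) (s * g) + (η : G → ℂ) (s * g) :=
        stmt6_ae_comp ν g (Lp.coeFn_add ξ η)
      have h3 := Lp.coeFn_add (F ξ) (F η)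
      have h4 := stmt6_coeFn_twist ν m hm hmn g ξ
      have h5 := stmt6_coeFn_twist ν m hm hmn g η
      filter_upwards [h2, h3, h4, h5] with s hs2 hs3 hs4 hs5
      simp only [Pi.add_apply] at *
      rw [hs2, hs3, hs4, hs5, mul_add]
    have hsmul : ∀ (c : ℂ) ξ, F (c • ξ) = c • F ξ := by
      intro c ξ
      apply Lp.ext
      refine (stmt6_coeFn_twist ν m hm hmn g (c • ξ)).trans ?_
      have h2 : (fun s => ((c • ξ : Lp ℂ 2 ν) : G → ℂ) (s * g)) =ᵐ[ν]
          fun s => c • (ξ : G → ℂ) (s * g) :=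
        stmt6_ae_comp ν g (Lp.coeFn_smul c ξ)
      have h3 := Lp.coeFn_smul c (F ξ)
      have h4 := stmt6_coeFn_twist ν m hm hmn g ξ
      filter_upwards [h2, h3, h4] with s hs2 hs3 hs4
      simp only [Pi.smul_apply, smul_eq_mul] at *
      rw [hs2, hs3, hs4]; ring
    let E : Lp ℂ 2 ν ≃ₗ[ℂ] Lp ℂ 2 ν :=
      { toFun := F, map_add' := hadd, map_smul' := hsmul, invFun := V,
        left_inv := hleft, right_inv := hright }
    let U : Lp ℂ 2 ν ≃ₗᵢ[ℂ] Lp ℂ 2 ν :=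
      { toLinearEquiv := E, norm_map' := fun ξ => stmt6_norm_twist ν m hm hmn g ξ }
    refine ⟨U, fun ξ => stmt6_coeFn_twist ν m hm hmn g ξ, ?_⟩
    intro U' hU'
    apply LinearIsometryEquiv.ext
    intro ξ
    exact Lp.ext ((hU' ξ).trans (stmt6_coeFn_twist ν m hm hmn g ξ).symm)
  · intro rho hrho g h ξ
    apply Lp.ext
    have h1 := hrho g (rho h ξ)
    have h2 : (fun s => ((rho h ξ : Lp ℂ 2 ν) : G → ℂ) (s * g)) =ᵐ[ν]
        fun s => ω h⁻¹ (s * g)⁻¹ * (ξ : G → ℂ) (s * g * h) :=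
      stmt6_ae_comp ν g (hrho h ξ)
    have h3 := Lp.coeFn_smul (ω h⁻¹ g⁻¹) (rho (g * h) ξ)
    have h4 := hrho (g * h) ξ
    filter_upwards [h1, h2, h3, h4] with s hs1 hs2 hs3 hs4
    rw [hs1, hs2, hs3]
    simp only [Pi.smul_apply, smul_eq_mul]
    rw [hs4]
    have key : ω h⁻¹ g⁻¹ * ω (g * h)⁻¹ s⁻¹ = ω h⁻¹ (s * g)⁻¹ * ω g⁻¹ s⁻¹ := by
      have := hcoc h⁻¹ g⁻¹ s⁻¹
      rw [show h⁻¹ * g⁻¹ = (g * h)⁻¹ by rw [mul_inv_rev],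
        show g⁻¹ * s⁻¹ = (s * g)⁻¹ by rw [mul_inv_rev]] at this
      exact this
    have harg : s * g * h = s * (g * h) := mul_assoc s g h
    rw [harg]
    calc ω g⁻¹ s⁻¹ * (ω h⁻¹ (s * g)⁻¹ * (ξ : G → ℂ) (s * (g * h)))
        = (ω h⁻¹ (s * g)⁻¹ * ω g⁻¹ s⁻¹) * (ξ : G → ℂ) (s * (g * h)) := by ring
      _ = (ω h⁻¹ g⁻¹ * ω (g * h)⁻¹ s⁻¹) * (ξ : G → ℂ) (s * (g * h)) := by rw [← key]
      _ = ω h⁻¹ g⁻¹ * (ω (g * h)⁻¹ s⁻¹ * (ξ : G → ℂ) (s * (g * h))) := by ring
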